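/- arXiv:0709.0800 — 2 statements merged into one kernel-verified Lean document; each statement's English description precedes it below -/
import Mathlib

section
/- Let p be an odd prime and let E be an extraspecial group of order p⁵ of exponent p. Let Z = Z(E) (of order p), and let A, B, C be subgroups of E of order p², pairwise intersecting trivially and satisfying AB ∩ C = 1. Suppose H is an abelian subgroup of E of order p³ containing Z such that |H ∩ AZ| = |H ∩ BZ| = p². Then H ∩ CZ = Z. -/
open scoped Pointwise

/-- A Kantor family of order `(s,t)` for a group `G`:
families `A i` (of order `s`) and `Astar i` (of order `st`), `i : Fin (t+1)`,
with `A i ≤ Astar i`, the tangency condition `A i ⊓ Astar j = ⊥` for `i ≠ j`,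
and the triple condition `A i * A j ∩ A k = 1` for pairwise distinct `i, j, k`. -/
def IsKantorFamily {G : Type*} [Group G] (s t : ℕ)
    (A Astar : Fin (t + 1) → Subgroup G) : Prop :=
  (∀ i, Nat.card (A i) = s) ∧
  (∀ i, Nat.card (Astar i) = s * t) ∧
  (∀ i, A i ≤ Astar i) ∧
  (∀ i j, i ≠ j → A i ⊓ Astar j = ⊥) ∧
  (∀ i j k, i ≠ j → j ≠ k → i ≠ k →
    ∀ g ∈ (A i : Set G) * (A j : Set G), g ∈ A k → g = 1)

/-- A finite `p`-group `G` is extraspecial if its centre, derived subgroup and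
Frattini subgroup coincide and have order `p`. -/
def IsExtraspecial (p : ℕ) (G : Type*) [Group G] : Prop :=
  Subgroup.center G = commutator G ∧ Subgroup.center G = frattini G ∧
    Nat.card (Subgroup.center G) = p


open Subgroup Function Pointwise

open Subgroup Function

section Aux
variable {E : Type*} [Group E]

lemma auxSurj {X Y : Type*} [Finite Y] (f : X → Y) (hinj : Injective f)
    (hcard : Nat.card X = Nat.card Y) : Surjective f :=
  ((Nat.bijective_iff_injective_and_card f).mpr ⟨hinj, hcard⟩).2

lemma auxCommMem (hc : Subgroup.center E = commutator E) (g h : E) :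
    g * h * g⁻¹ * h⁻¹ ∈ Subgroup.center E := by
  rw [hc]
  exact Subgroup.commutator_mem_commutator (Subgroup.mem_top g) (Subgroup.mem_top h)

lemma auxSemicomm {x y γ : E} (hγ : ∀ t, γ * t = t * γ) (h : y * x = x * y * γ) :
    ∀ k : ℕ, y ^ k * x = x * y ^ k * γ ^ k := by
  intro k
  induction k with
  | zero => simp
  | succ n ih =>
    have hgn : ∀ t : E, γ ^ n * t = t * γ ^ n := fun t => ((Commute.pow_left (hγ t) n))
    calc y ^ (n+1) * x = y ^ n * (y * x) := by rw [pow_succ, mul_assoc]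
    _ = (y ^ n * x) * (y * γ) := by rw [h]; group
    _ = (x * y ^ n * γ ^ n) * (y * γ) := by rw [ih]
    _ = x * y ^ n * (γ ^ n * y) * γ := by group
    _ = x * y ^ n * (y * γ ^ n) * γ := by rw [hgn y]
    _ = x * y ^ (n+1) * γ ^ (n+1) := by rw [pow_succ, pow_succ]; group

end Aux
section Aux2
variable {E : Type*} [Group E] {p : ℕ}

lemma auxCentralizerCard (hp : p.Prime) (hE : Nat.card E = p ^ 5)
    (hcomm : ∀ g h : E, g * h * g⁻¹ * h⁻¹ ∈ Subgroup.center E)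
    (hZ : Nat.card (Subgroup.center E) = p)
    {a : E} (ha : a ∉ Subgroup.center E) :
    Nat.card (Subgroup.centralizer {a}) = p ^ 4 := by
  have hfin : Finite E := Nat.finite_of_card_ne_zero (by rw [hE]; exact pow_ne_zero 5 hp.pos.ne')
  set Z := Subgroup.center E with hZdef
  have hkey : ∀ g h : E, a * (g * h) * a⁻¹ * (g * h)⁻¹
      = (a * g * a⁻¹ * g⁻¹) * (a * h * a⁻¹ * h⁻¹) := by
    intro g h
    have h1 : a * (g * h) * a⁻¹ * (g * h)⁻¹
        = (a * g * a⁻¹ * g⁻¹) * (g * (a * h * a⁻¹ * h⁻¹) * g⁻¹) := by group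
    rw [h1, show g * (a * h * a⁻¹ * h⁻¹) * g⁻¹ = a * h * a⁻¹ * h⁻¹ from by
      rw [Subgroup.mem_center_iff.mp (hcomm a h) g]; group]
  let φ : E →* Z := {
    toFun := fun g => ⟨a * g * a⁻¹ * g⁻¹, hcomm a g⟩
    map_one' := by ext; simp
    map_mul' := fun g h => by ext; exact hkey g h }
  have hval : ∀ g : E, (φ g : E) = a * g * a⁻¹ * g⁻¹ := fun g => rfl
  have hone : ∀ g : E, φ g = 1 ↔ g * a = a * g := by
    intro g
    constructor
    · intro h
      have h2 : a * g * a⁻¹ * g⁻¹ = 1 := congrArg Subtype.val h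
      have := congrArg (· * (g * a)) h2
      simpa [mul_assoc] using this.symm
    · intro h
      ext
      show a * g * a⁻¹ * g⁻¹ = 1
      rw [← h]; group
  have hker : φ.ker = Subgroup.centralizer {a} := by
    ext g
    rw [MonoidHom.mem_ker, Subgroup.mem_centralizer_singleton_iff, hone g]
  have hdvd : Nat.card φ.range ∣ p := hZ ▸ Subgroup.card_subgroup_dvd_card φ.range
  have hrange : φ.range = ⊤ := by
    rcases hp.eq_one_or_self_of_dvd _ hdvd with h1 | hp'
    · exfalso
      rw [Subgroup.card_eq_one] at h1
      apply ha
      rw [hZdef, Subgroup.mem_center_iff]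
      intro g
      have hm : φ g ∈ φ.range := ⟨g, rfl⟩
      rw [h1, Subgroup.mem_bot] at hm
      exact (hone g).mp hm
    · exact Subgroup.eq_top_of_card_eq _ (hp'.trans hZ.symm)
  have hq : Nat.card (E ⧸ φ.ker) = p := by
    rw [Nat.card_congr (QuotientGroup.quotientKerEquivRange φ).toEquiv, hrange, ← hZ]
    exact Nat.card_congr (Equiv.subtypeUnivEquiv (by simp))
  have hcard := Subgroup.card_eq_card_quotient_mul_card_subgroup φ.ker
  rw [hE, hq] at hcard
  rw [← hker]
  have hppos : 0 < p := hp.pos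
  nlinarith [hcard, pow_succ p 4]

end Aux2

section Aux3
variable {E : Type*} [Group E] {p : ℕ}

lemma auxProdRange (K L : Subgroup E) :
    (K : Set E) * (L : Set E) = Set.range (fun x : K × L => (x.1 : E) * x.2) := by
  ext e
  simp only [Set.mem_mul, Set.mem_range, Prod.exists, Subtype.exists, SetLike.mem_coe]
  constructor
  · rintro ⟨k, hk, l, hl, rfl⟩; exact ⟨k, hk, l, hl, rfl⟩
  · rintro ⟨k, hk, l, hl, rfl⟩; exact ⟨k, hk, l, hl, rfl⟩

lemma auxProdInj {K L : Subgroup E} (hKL : K ⊓ L = ⊥) :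
    Injective (fun x : K × L => (x.1 : E) * x.2) := by
  rintro ⟨⟨k1, hk1⟩, ⟨l1, hl1⟩⟩ ⟨⟨k2, hk2⟩, ⟨l2, hl2⟩⟩ h
  simp only at h
  have hm : k2⁻¹ * k1 ∈ K ⊓ L := by
    constructor
    · exact K.mul_mem (K.inv_mem hk2) hk1
    · have heq : k2⁻¹ * k1 = l2 * l1⁻¹ := by
        have h' := congrArg (fun t => k2⁻¹ * t * l1⁻¹) h
        simpa [mul_assoc] using h'
      rw [heq]; exact L.mul_mem hl2 (L.inv_mem hl1)
  rw [hKL, Subgroup.mem_bot] at hm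
  have hk : k1 = k2 := (inv_mul_eq_one.mp hm).symm
  subst hk
  have : l1 = l2 := by exact mul_left_cancel h
  simp [this]

lemma auxProdCardSet {K L : Subgroup E} (hKL : K ⊓ L = ⊥) :
    Nat.card ((K : Set E) * (L : Set E) : Set E) = Nat.card K * Nat.card L := by
  rw [auxProdRange, Nat.card_range_of_injective (auxProdInj hKL), Nat.card_prod]

lemma auxMemProd (hp : p.Prime) (hE : Nat.card E = p ^ 5)
    (hcomm : ∀ g h : E, g * h * g⁻¹ * h⁻¹ ∈ Subgroup.center E)
    (hZ : Nat.card (Subgroup.center E) = p)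
    {w : E} (hw : w ∉ Subgroup.center E)
    {K L : Subgroup E} (hK : Nat.card K = p ^ 2) (hL : Nat.card L = p ^ 2)
    (hKL : K ⊓ L = ⊥)
    (hKw : ∀ k ∈ K, w * k = k * w) (hLw : ∀ l ∈ L, w * l = l * w)
    {e : E} (he : w * e = e * w) : e ∈ (K : Set E) * (L : Set E) := by
  have hfin : Finite E := Nat.finite_of_card_ne_zero (by rw [hE]; exact pow_ne_zero 5 hp.pos.ne')
  have hsub : (K : Set E) * (L : Set E) ⊆ (Subgroup.centralizer {w} : Set E) := by
    rintro x ⟨k, hk, l, hl, rfl⟩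
    have hkc : k ∈ Subgroup.centralizer {w} :=
      Subgroup.mem_centralizer_singleton_iff.mpr (hKw k hk).symm
    have hlc : l ∈ Subgroup.centralizer {w} :=
      Subgroup.mem_centralizer_singleton_iff.mpr (hLw l hl).symm
    exact Subgroup.mul_mem _ hkc hlc
  have hceq : (K : Set E) * (L : Set E) = (Subgroup.centralizer {w} : Set E) := by
    apply Set.eq_of_subset_of_ncard_le hsub _ (Set.toFinite _)
    rw [← Nat.card_coe_set_eq, ← Nat.card_coe_set_eq]
    rw [auxProdCardSet hKL, hK, hL]
    have : Nat.card (Subgroup.centralizer {w} : Set E) = Nat.card (Subgroup.centralizer {w}) := rfl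
    rw [this, auxCentralizerCard hp hE hcomm hZ hw]
    ring_nf
    exact le_of_eq (by ring)
  rw [hceq]
  exact Subgroup.mem_centralizer_singleton_iff.mpr he.symm
lemma auxCancel {K L : Subgroup E} (hKL : K ⊓ L = ⊥) {k1 k2 l1 l2 : E}
    (hk1 : k1 ∈ K) (hk2 : k2 ∈ K) (hl1 : l1 ∈ L) (hl2 : l2 ∈ L)
    (h : k1 * l1 = k2 * l2) : k1 = k2 ∧ l1 = l2 := by
  have heq : k2⁻¹ * k1 = l2 * l1⁻¹ := by
    have h' := congrArg (fun t => k2⁻¹ * t * l1⁻¹) h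
    simpa [mul_assoc] using h'
  have hm : k2⁻¹ * k1 ∈ K ⊓ L :=
    ⟨K.mul_mem (K.inv_mem hk2) hk1, by rw [heq]; exact L.mul_mem hl2 (L.inv_mem hl1)⟩
  rw [hKL, Subgroup.mem_bot] at hm
  have hk : k1 = k2 := (inv_mul_eq_one.mp hm).symm
  subst hk
  exact ⟨rfl, mul_left_cancel h⟩

lemma auxPowRecover {p : ℕ} [Fact p.Prime] {a : E} (ho : orderOf a = p) (m : ℤ)
    (hm : (m : ZMod p) ≠ 0) : ∃ m' : ℤ, (a ^ m) ^ m' = a := by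
  obtain ⟨m', hm'⟩ := ZMod.intCast_surjective ((m : ZMod p)⁻¹)
  refine ⟨m', ?_⟩
  rw [← zpow_mul]
  have h1 : a ^ (m * m' - 1) = 1 := by
    rw [← orderOf_dvd_iff_zpow_eq_one, ho, ← ZMod.intCast_zmod_eq_zero_iff_dvd]
    push_cast
    rw [hm', mul_inv_cancel₀ hm, sub_self]
  have h2 : m * m' = (m * m' - 1) + 1 := by ring
  rw [h2, zpow_add, h1, one_mul, zpow_one]

end Aux3


theorem stmt15 {E : Type*} [Group E] (p : ℕ) (hp : p.Prime) (hodd : Odd p)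
    (hE : Nat.card E = p ^ 5) (hes : IsExtraspecial p E)
    (hexpE : ∀ g : E, g ^ p = 1)
    (A B C : Subgroup E)
    (hA : Nat.card A = p ^ 2) (hB : Nat.card B = p ^ 2) (hC : Nat.card C = p ^ 2)
    (hAB : A ⊓ B = ⊥) (hAC : A ⊓ C = ⊥) (hBC : B ⊓ C = ⊥)
    (htriple : ∀ g ∈ (A : Set E) * (B : Set E), g ∈ C → g = 1)
    (H : Subgroup E) (hHab : IsMulCommutative H) (hHcard : Nat.card H = p ^ 3)
    (hZH : Subgroup.center E ≤ H)
    (hHA : Nat.card ↥(H ⊓ (A ⊔ Subgroup.center E)) = p ^ 2)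
    (hHB : Nat.card ↥(H ⊓ (B ⊔ Subgroup.center E)) = p ^ 2) :
    H ⊓ (C ⊔ Subgroup.center E) = Subgroup.center E := by
  obtain ⟨hcent_comm, -, hZ⟩ := hes
  haveI : Fact p.Prime := ⟨hp⟩
  set Z := Subgroup.center E with hZdef
  have hfinE : Finite E := Nat.finite_of_card_ne_zero (by rw [hE]; exact pow_ne_zero 5 hp.pos.ne')
  have hcomm : ∀ g h : E, g * h * g⁻¹ * h⁻¹ ∈ Z := auxCommMem hcent_comm
  have horder : ∀ g : E, g ≠ 1 → orderOf g = p := fun g hg => orderOf_eq_prime (hexpE g) hg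
  have hne1 : ∀ g : E, g ∉ Z → g ≠ 1 := fun g hg h1 => hg (h1 ▸ Z.one_mem)
  have hcentral : ∀ z : E, z ∈ Z → ∀ t : E, z * t = t * z :=
    fun z hz t => (Subgroup.mem_center_iff.mp hz t).symm
  have hZgen : ∀ z : E, z ∈ Z → z ≠ 1 → Subgroup.zpowers z = Z := by
    intro z hz h1
    apply Subgroup.eq_of_le_of_card_ge (Subgroup.zpowers_le.mpr hz)
    rw [hZ, Nat.card_zpowers, horder z h1]
  have hZsmall : ∀ z : E, z ∈ Z → ∀ K : Subgroup E, z ∈ K → z ≠ 1 → Z ≤ K := by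
    intro z hz K hzK h1
    rw [← hZgen z hz h1]
    exact Subgroup.zpowers_le.mpr hzK
  -- commutativity facts
  have hAcomm : ∀ x y : E, x ∈ A → y ∈ A → x * y = y * x := fun x y hx hy =>
    congrArg Subtype.val (IsPGroup.commutative_of_card_eq_prime_sq hA ⟨x, hx⟩ ⟨y, hy⟩)
  have hBcomm : ∀ x y : E, x ∈ B → y ∈ B → x * y = y * x := fun x y hx hy =>
    congrArg Subtype.val (IsPGroup.commutative_of_card_eq_prime_sq hB ⟨x, hx⟩ ⟨y, hy⟩)
  have hCcomm : ∀ x y : E, x ∈ C → y ∈ C → x * y = y * x := fun x y hx hy =>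
    congrArg Subtype.val (IsPGroup.commutative_of_card_eq_prime_sq hC ⟨x, hx⟩ ⟨y, hy⟩)
  haveI := hHab
  have hHcomm : ∀ x y : E, x ∈ H → y ∈ H → x * y = y * x := fun x y hx hy =>
    Subgroup.mul_comm_of_mem_isMulCommutative (H := H) hx hy
  -- extraction of noncentral elements of H in A (resp B)
  have hextract : ∀ K : Subgroup E, Nat.card ↥(H ⊓ (K ⊔ Z)) = p ^ 2 →
      ∃ a : E, a ∈ K ∧ a ∈ H ∧ a ∉ Z := by
    intro K hcard
    have h1 : ¬(H ⊓ (K ⊔ Z) ≤ Z) := by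
      intro hle
      have h2 := Subgroup.card_le_of_le hle
      rw [hcard, hZ, pow_two] at h2
      nlinarith [hp.one_lt]
    obtain ⟨u, hu, huZ⟩ := SetLike.not_le_iff_exists.mp h1
    obtain ⟨huH, huKZ⟩ := hu
    have hum : u ∈ (K : Set E) * (Z : Set E) := by
      rw [← Subgroup.mul_normal]; exact huKZ
    obtain ⟨k, hk, z, hz, hkz⟩ := hum
    refine ⟨k, hk, ?_, ?_⟩
    · have hk' : k = u * z⁻¹ := by rw [← hkz]; group
      rw [hk']; exact H.mul_mem huH (H.inv_mem (hZH hz))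
    · intro hkZ
      exact huZ (by rw [← hkz]; exact Z.mul_mem hkZ hz)
  obtain ⟨a, haA, haH, haZ⟩ := hextract A hHA
  obtain ⟨b, hbB, hbH, hbZ⟩ := hextract B hHB
  -- main goal
  apply le_antisymm _ (le_inf hZH le_sup_right)
  intro x hx
  obtain ⟨hxH, hxCZ⟩ := hx
  have hxmem : x ∈ (C : Set E) * (Z : Set E) := by
    rw [← Subgroup.mul_normal]; exact hxCZ
  obtain ⟨c, hcC, z₀, hz₀, hxc⟩ := hxmem
  show x ∈ Z
  by_cases hcZ : c ∈ Z
  · rw [← hxc]; exact Z.mul_mem hcZ hz₀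
  exfalso
  have hcne1 : c ≠ 1 := hne1 c hcZ
  have hceq : c = x * z₀⁻¹ := by rw [← hxc, mul_assoc, mul_inv_cancel, mul_one]
  have hccomm : ∀ h : E, h ∈ H → c * h = h * c := by
    intro h hh
    rw [hceq, mul_assoc, hcentral z₀⁻¹ (Z.inv_mem hz₀) h, ← mul_assoc,
      hHcomm x h hxH hh, mul_assoc]
  -- a convenient closing move
  have hclose : c ∈ (A : Set E) * (B : Set E) → False := fun hmem => hcne1 (htriple c hmem hcC)
  have hcloseB : ∀ w : E, w ∉ Z → (∀ l ∈ B, w * l = l * w) → (∀ l ∈ C, w * l = l * w) →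
      w * a = a * w → False := by
    intro w hwZ hwB hwC hwa
    have hmem : a ∈ (B : Set E) * (C : Set E) :=
      auxMemProd hp hE hcomm hZ hwZ hB hC hBC hwB hwC hwa
    obtain ⟨b₂, hb₂, c₂, hc₂, hbc⟩ := hmem
    have hc₂eq : a⁻¹ * b₂ = c₂⁻¹ := by rw [← hbc]; group
    have h1 : a⁻¹ * b₂ = 1 := htriple _ (Set.mul_mem_mul (A.inv_mem haA) hb₂)
      (by rw [hc₂eq]; exact C.inv_mem hc₂)
    have h2 : a = b₂ := inv_mul_eq_one.mp h1
    have h3 : a ∈ A ⊓ B := ⟨haA, h2 ▸ hb₂⟩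
    rw [hAB, Subgroup.mem_bot] at h3
    exact hne1 a haZ h3
  have hcloseA : ∀ w : E, w ∉ Z → (∀ l ∈ A, w * l = l * w) → (∀ l ∈ C, w * l = l * w) →
      w * b = b * w → False := by
    intro w hwZ hwA hwC hwb
    have hmem : b ∈ (A : Set E) * (C : Set E) :=
      auxMemProd hp hE hcomm hZ hwZ hA hC hAC hwA hwC hwb
    obtain ⟨a₂, ha₂, c₂, hc₂, hac⟩ := hmem
    have hc₂eq : a₂⁻¹ * b = c₂ := by rw [← hac]; group
    have h1 : a₂⁻¹ * b = 1 := htriple _ (Set.mul_mem_mul (A.inv_mem ha₂) hbB)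
      (by rw [hc₂eq]; exact hc₂)
    have h2 : a₂ = b := inv_mul_eq_one.mp h1
    have h3 : b ∈ A ⊓ B := ⟨h2 ▸ ha₂, hbB⟩
    rw [hAB, Subgroup.mem_bot] at h3
    exact hne1 b hbZ h3
  -- Case I : Z ≤ A
  by_cases hZA : Z ≤ A
  · rw [sup_eq_left.mpr hZA] at hHA
    have hAleH : A ≤ H := by
      have heq : H ⊓ A = A := Subgroup.eq_of_le_of_card_ge inf_le_right (by rw [hHA, hA])
      rw [← heq]; exact inf_le_left
    have hbne : b ≠ 1 := hne1 b hbZ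
    have hzbH : Subgroup.zpowers b ≤ H := Subgroup.zpowers_le.mpr hbH
    have hzbB : Subgroup.zpowers b ≤ B := Subgroup.zpowers_le.mpr hbB
    have hABz : A ⊓ Subgroup.zpowers b = ⊥ :=
      le_bot_iff.mp (hAB ▸ inf_le_inf_left A hzbB)
    let f : ↥A × ↥(Subgroup.zpowers b) → ↥H := fun u =>
      ⟨u.1 * u.2, H.mul_mem (hAleH u.1.2) (hzbH u.2.2)⟩
    have hinj : Function.Injective f := by
      rintro ⟨u1, v1⟩ ⟨u2, v2⟩ huv
      have h0 : (u1 : E) * v1 = u2 * v2 := congrArg Subtype.val huv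
      obtain ⟨h1, h2⟩ := auxCancel hABz u1.2 u2.2 v1.2 v2.2 h0
      simp only [Prod.ext_iff, Subtype.ext_iff]
      exact ⟨h1, h2⟩
    have hsurj := auxSurj f hinj (by
      rw [Nat.card_prod, hA, Nat.card_zpowers, horder b hbne, hHcard]; ring)
    obtain ⟨⟨u, v⟩, huv⟩ := hsurj ⟨x, hxH⟩
    have hx' : x = u * v := (congrArg Subtype.val huv).symm
    apply hclose
    have hcuv : c = ((u : E) * z₀⁻¹) * v := by
      rw [hceq, hx', mul_assoc, ← hcentral z₀⁻¹ (Z.inv_mem hz₀) (v : E), ← mul_assoc]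
    rw [hcuv]
    exact Set.mul_mem_mul (A.mul_mem u.2 (A.inv_mem (hZA hz₀))) (hzbB v.2)
  -- Case II : Z ≤ B
  by_cases hZB : Z ≤ B
  · rw [sup_eq_left.mpr hZB] at hHB
    have hBleH : B ≤ H := by
      have heq : H ⊓ B = B := Subgroup.eq_of_le_of_card_ge inf_le_right (by rw [hHB, hB])
      rw [← heq]; exact inf_le_left
    have hane : a ≠ 1 := hne1 a haZ
    have hzaH : Subgroup.zpowers a ≤ H := Subgroup.zpowers_le.mpr haH
    have hzaA : Subgroup.zpowers a ≤ A := Subgroup.zpowers_le.mpr haA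
    have hzAB : Subgroup.zpowers a ⊓ B = ⊥ :=
      le_bot_iff.mp (hAB ▸ inf_le_inf_right B hzaA)
    let f : ↥(Subgroup.zpowers a) × ↥B → ↥H := fun u =>
      ⟨u.1 * u.2, H.mul_mem (hzaH u.1.2) (hBleH u.2.2)⟩
    have hinj : Function.Injective f := by
      rintro ⟨u1, v1⟩ ⟨u2, v2⟩ huv
      have h0 : (u1 : E) * v1 = u2 * v2 := congrArg Subtype.val huv
      obtain ⟨h1, h2⟩ := auxCancel hzAB u1.2 u2.2 v1.2 v2.2 h0
      simp only [Prod.ext_iff, Subtype.ext_iff]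
      exact ⟨h1, h2⟩
    have hsurj := auxSurj f hinj (by
      rw [Nat.card_prod, hB, Nat.card_zpowers, horder a hane, hHcard]; ring)
    obtain ⟨⟨u, v⟩, huv⟩ := hsurj ⟨x, hxH⟩
    have hx' : x = u * v := (congrArg Subtype.val huv).symm
    apply hclose
    have hcuv : c = (u : E) * ((v : E) * z₀⁻¹) := by
      rw [hceq, hx', mul_assoc]
    rw [hcuv]
    exact Set.mul_mem_mul (hzaA u.2) (B.mul_mem v.2 (B.inv_mem (hZB hz₀)))
  have hZA' : ∀ g : E, g ∈ Z → g ∈ A → g = 1 := by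
    intro g hg hgA
    by_contra h1
    exact hZA (hZsmall g hg A hgA h1)
  have hZB' : ∀ g : E, g ∈ Z → g ∈ B → g = 1 := by
    intro g hg hgB
    by_contra h1
    exact hZB (hZsmall g hg B hgB h1)
  -- Case III : a is a power of b mod Z
  by_cases hIII : ∃ (k : ℤ) (z : E), z ∈ Z ∧ a = b ^ k * z
  · obtain ⟨k, z, hzZ, habk⟩ := hIII
    refine hclose (auxMemProd hp hE hcomm hZ haZ hA hB hAB
      (fun l hl => hAcomm a l haA hl) ?_ (hccomm a haH).symm)
    intro l hl
    rw [habk, mul_assoc, hcentral z hzZ l, ← mul_assoc,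
      hBcomm (b ^ k) l (B.zpow_mem hbB k) hl, mul_assoc]
  -- independence of a and b mod Z
  have hindep : ∀ m n : ℤ, a ^ m * b ^ n ∈ Z → a ^ m = 1 ∧ b ^ n = 1 := by
    intro m0 n0 hmn
    by_cases hm : ((m0 : ZMod p)) = 0
    · obtain ⟨t, rfl⟩ := (ZMod.intCast_zmod_eq_zero_iff_dvd m0 p).mp hm
      have ham : a ^ ((p : ℤ) * t) = 1 := by
        rw [zpow_mul, zpow_natCast, hexpE a, one_zpow]
      refine ⟨ham, ?_⟩
      rw [ham, one_mul] at hmn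
      by_cases hn : ((n0 : ZMod p)) = 0
      · obtain ⟨t2, rfl⟩ := (ZMod.intCast_zmod_eq_zero_iff_dvd n0 p).mp hn
        rw [zpow_mul, zpow_natCast, hexpE b, one_zpow]
      · exfalso
        obtain ⟨n', hn'⟩ := auxPowRecover (horder b (hne1 b hbZ)) n0 hn
        exact hbZ (hn' ▸ Z.zpow_mem hmn n')
    · exfalso
      obtain ⟨m', hm'⟩ := auxPowRecover (horder a (hne1 a haZ)) m0 hm
      have h1 : a ^ m0 = (a ^ m0 * b ^ n0) * b ^ (-n0) := by
        rw [zpow_neg]; group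
      have hzm : (a ^ m0 * b ^ n0) ^ m' ∈ Z := Z.zpow_mem hmn m'
      have h2 : a = b ^ (-n0 * m') * (a ^ m0 * b ^ n0) ^ m' := by
        have hcom : Commute (a ^ m0 * b ^ n0) (b ^ (-n0)) :=
          hcentral _ hmn (b ^ (-n0))
        calc a = (a ^ m0) ^ m' := hm'.symm
          _ = ((a ^ m0 * b ^ n0) * b ^ (-n0)) ^ m' := by rw [← h1]
          _ = (a ^ m0 * b ^ n0) ^ m' * (b ^ (-n0)) ^ m' := hcom.mul_zpow m'
          _ = (a ^ m0 * b ^ n0) ^ m' * b ^ (-n0 * m') := by rw [← zpow_mul]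
          _ = b ^ (-n0 * m') * (a ^ m0 * b ^ n0) ^ m' := hcentral _ hzm _
      exact hIII ⟨-n0 * m', (a ^ m0 * b ^ n0) ^ m', hzm, h2⟩
  -- decomposition of H
  have hHdec : ∀ y : E, y ∈ H → ∃ (m n : ℤ) (z : E), z ∈ Z ∧ y = a ^ m * b ^ n * z := by
    have hane : a ≠ 1 := hne1 a haZ
    have hbne : b ≠ 1 := hne1 b hbZ
    let f : ↥(Subgroup.zpowers a) × ↥(Subgroup.zpowers b) × ↥Z → ↥H := fun u =>
      ⟨u.1 * ((u.2.1 : E) * u.2.2), H.mul_mem (Subgroup.zpowers_le.mpr haH u.1.2)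
        (H.mul_mem (Subgroup.zpowers_le.mpr hbH u.2.1.2) (hZH u.2.2.2))⟩
    have hinj : Function.Injective f := by
      rintro ⟨u1, v1, w1⟩ ⟨u2, v2, w2⟩ huv
      have h0 : (u1 : E) * ((v1 : E) * (w1 : E)) = u2 * ((v2 : E) * (w2 : E)) :=
        congrArg Subtype.val huv
      obtain ⟨m1, hm1⟩ := Subgroup.mem_zpowers_iff.mp u1.2
      obtain ⟨m2, hm2⟩ := Subgroup.mem_zpowers_iff.mp u2.2
      obtain ⟨n1, hn1⟩ := Subgroup.mem_zpowers_iff.mp v1.2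
      obtain ⟨n2, hn2⟩ := Subgroup.mem_zpowers_iff.mp v2.2
      rw [← hm1, ← hm2, ← hn1, ← hn2] at h0
      have hw1 := w1.2
      have hw2 := w2.2
      have hw21 : (w2 : E) * (w1 : E)⁻¹ ∈ Z := Z.mul_mem hw2 (Z.inv_mem hw1)
      have key : a ^ (m1 - m2) * b ^ (n1 - n2) = (w2 : E) * (w1 : E)⁻¹ := by
        calc a ^ (m1 - m2) * b ^ (n1 - n2)
            = a ^ (-m2) * (a ^ m1 * (b ^ n1 * (w1 : E))) * (w1 : E)⁻¹ * b ^ (-n2) := by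
              rw [show (m1 - m2) = -m2 + m1 by ring, show (n1 - n2) = n1 + -n2 by ring,
                zpow_add, zpow_add]
              group
          _ = a ^ (-m2) * (a ^ m2 * (b ^ n2 * (w2 : E))) * (w1 : E)⁻¹ * b ^ (-n2) := by
              rw [h0]
          _ = b ^ n2 * ((w2 : E) * (w1 : E)⁻¹) * b ^ (-n2) := by group
          _ = ((w2 : E) * (w1 : E)⁻¹) * b ^ n2 * b ^ (-n2) := by
              rw [← hcentral _ hw21 (b ^ n2)]
          _ = (w2 : E) * (w1 : E)⁻¹ := by group
        
      obtain ⟨ha0, hb0⟩ := hindep _ _ (key ▸ hw21)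
      have hu : u1 = u2 := by
        apply Subtype.ext
        rw [← hm1, ← hm2]
        have : a ^ m1 * (a ^ m2)⁻¹ = 1 := by rw [← zpow_neg, ← zpow_add, ← sub_eq_add_neg]; exact ha0
        exact mul_inv_eq_one.mp this
      have hv : v1 = v2 := by
        apply Subtype.ext
        rw [← hn1, ← hn2]
        have : b ^ n1 * (b ^ n2)⁻¹ = 1 := by rw [← zpow_neg, ← zpow_add, ← sub_eq_add_neg]; exact hb0
        exact mul_inv_eq_one.mp this
      have hw : w1 = w2 := by
        apply Subtype.ext
        have h5 : (w2 : E) * (w1 : E)⁻¹ = 1 := by rw [← key, ha0, hb0, one_mul]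
        exact (mul_inv_eq_one.mp h5).symm
      simp only [Prod.ext_iff]
      exact ⟨hu, hv, hw⟩
    have hsurj := auxSurj f hinj (by
      rw [Nat.card_prod, Nat.card_prod, Nat.card_zpowers, Nat.card_zpowers,
        horder a hane, horder b hbne, hZ, hHcard]; ring)
    intro y hy
    obtain ⟨⟨u, v, w⟩, huv⟩ := hsurj ⟨y, hy⟩
    obtain ⟨m1, hm1⟩ := Subgroup.mem_zpowers_iff.mp u.2
    obtain ⟨n1, hn1⟩ := Subgroup.mem_zpowers_iff.mp v.2
    refine ⟨m1, n1, w, w.2, ?_⟩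
    have hy' : y = (u : E) * ((v : E) * (w : E)) := (congrArg Subtype.val huv).symm
    rw [hy', ← hm1, ← hn1, mul_assoc]
  obtain ⟨m, n, z₁, hz₁Z, hxdec⟩ := hHdec x hxH
  have hcdec : c = a ^ m * b ^ n * (z₁ * z₀⁻¹) := by
    rw [hceq, hxdec]; group
  have hz₁₀ : z₁ * z₀⁻¹ ∈ Z := Z.mul_mem hz₁Z (Z.inv_mem hz₀)
  -- Case IV : A and B meet mod Z
  by_cases hIV : ∃ a₁ b₁ : E, a₁ ∈ A ∧ b₁ ∈ B ∧ a₁ * b₁ ∈ Z ∧ a₁ ∉ Z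
  · obtain ⟨a₁, b₁, ha₁, hb₁, hab₁Z, ha₁Z⟩ := hIV
    have hBa₁ : ∀ l ∈ B, a₁ * l = l * a₁ := by
      intro l hl
      have h1 : a₁ * l = a₁ * b₁ * b₁⁻¹ * l := by group
      rw [h1, mul_assoc (a₁ * b₁) b₁⁻¹ l, hBcomm b₁⁻¹ l (B.inv_mem hb₁) hl,
        ← mul_assoc, hcentral (a₁ * b₁) hab₁Z l]
      group
    have hAa₁ : ∀ l ∈ A, a₁ * l = l * a₁ := fun l hl => hAcomm a₁ l ha₁ hl
    have hca₁ : a₁ * c = c * a₁ := by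
      have h1 : Commute a₁ (a ^ m) := Commute.zpow_right (hAcomm a₁ a ha₁ haA) m
      have h2 : Commute a₁ (b ^ n) := Commute.zpow_right (hBa₁ b hbB) n
      have h3 : Commute a₁ (z₁ * z₀⁻¹) := (hcentral _ hz₁₀ a₁).symm
      rw [hcdec]
      exact (h1.mul_right h2).mul_right h3
    exact hclose (auxMemProd hp hE hcomm hZ ha₁Z hA hB hAB hAa₁ hBa₁ hca₁)
  -- Case V
  have hV : ∀ a₁ b₁ : E, a₁ ∈ A → b₁ ∈ B → a₁ * b₁ ∈ Z → a₁ = 1 ∧ b₁ = 1 := by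
    push_neg at hIV
    intro a₁ b₁ ha₁ hb₁ hab₁
    have ha₁Z : a₁ ∈ Z := hIV a₁ b₁ ha₁ hb₁ hab₁
    have ha₁1 : a₁ = 1 := hZA' a₁ ha₁Z ha₁
    refine ⟨ha₁1, ?_⟩
    rw [ha₁1, one_mul] at hab₁
    exact hZB' b₁ hab₁ hb₁
  by_cases hamZ : a ^ m ∈ Z
  · have hbnZ' : b ^ n ∉ Z := by
      intro hbn
      exact hcZ (by rw [hcdec]; exact Z.mul_mem (Z.mul_mem hamZ hbn) hz₁₀)
    have hw : a ^ m * (z₁ * z₀⁻¹) ∈ Z := Z.mul_mem hamZ hz₁₀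
    have hbn_eq : b ^ n = c * (a ^ m * (z₁ * z₀⁻¹))⁻¹ := by
      rw [hcdec, hcentral (a ^ m) hamZ (b ^ n)]
      group
    refine hcloseB (b ^ n) hbnZ' (fun l hl => hBcomm (b ^ n) l (B.zpow_mem hbB n) hl)
      ?_ (hHcomm (b ^ n) a (H.zpow_mem hbH n) haH)
    intro l hl
    rw [hbn_eq, mul_assoc, hcentral _ (Z.inv_mem hw) l, ← mul_assoc,
      hCcomm c l hcC hl, mul_assoc]
  by_cases hbnZ : b ^ n ∈ Z
  · have hw : b ^ n * (z₁ * z₀⁻¹) ∈ Z := Z.mul_mem hbnZ hz₁₀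
    have ham_eq : a ^ m = c * (b ^ n * (z₁ * z₀⁻¹))⁻¹ := by
      rw [hcdec]; group
    refine hcloseA (a ^ m) hamZ (fun l hl => hAcomm (a ^ m) l (A.zpow_mem haA m) hl)
      ?_ (hHcomm (a ^ m) b (H.zpow_mem haH m) hbH)
    intro l hl
    rw [ham_eq, mul_assoc, hcentral _ (Z.inv_mem hw) l, ← mul_assoc,
      hCcomm c l hcC hl, mul_assoc]
  -- heart of the matter
  set a' := a ^ m with ha'def
  set b' := b ^ n with hb'def
  set z₂ := z₁ * z₀⁻¹ with hz₂def
  have ha'A : a' ∈ A := A.zpow_mem haA m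
  have hb'B : b' ∈ B := B.zpow_mem hbB n
  have ha'H : a' ∈ H := H.zpow_mem haH m
  have hb'H : b' ∈ H := H.zpow_mem hbH n
  have hz2Z : z₂ ∈ Z := hz₁₀
  by_cases hz21 : z₂ = 1
  · rw [hz21, mul_one] at hcdec
    exact hclose (hcdec ▸ Set.mul_mem_mul ha'A hb'B)
  by_cases hz2C : z₂ ∈ C
  · have h1 : a' * b' = c * z₂⁻¹ := by rw [hcdec]; group
    have h2 : a' * b' = 1 := htriple _ (Set.mul_mem_mul ha'A hb'B)
      (by rw [h1]; exact C.mul_mem hcC (C.inv_mem hz2C))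
    have h3 : a' = b'⁻¹ := by
      have := congrArg (fun t => t * b'⁻¹) h2
      simpa [mul_assoc] using this
    have h4 : a' ∈ A ⊓ B := ⟨ha'A, by rw [h3]; exact B.inv_mem hb'B⟩
    rw [hAB, Subgroup.mem_bot] at h4
    exact hamZ (by rw [h4]; exact Z.one_mem)
  -- existence of a second generator of C
  have hcp : orderOf c = p := horder c hcne1
  have hex_d : ∃ d, d ∈ C ∧ ∀ t : ℤ, ∀ z ∈ Z, d ≠ c ^ t * z := by
    by_contra hcon
    push_neg at hcon
    have hCle : C ≤ Subgroup.zpowers c ⊔ Z := by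
      intro d hd
      obtain ⟨t, z, hz, hdtz⟩ := hcon d hd
      rw [hdtz]
      exact Subgroup.mul_mem _
        (Subgroup.mem_sup_left (Subgroup.zpow_mem _ (Subgroup.mem_zpowers c) t))
        (Subgroup.mem_sup_right hz)
    have hcard2 : Nat.card ↥(Subgroup.zpowers c ⊔ Z) ≤ p * p := by
      have hset : ((Subgroup.zpowers c ⊔ Z : Subgroup E) : Set E)
          = (Subgroup.zpowers c : Set E) * (Z : Set E) := Subgroup.mul_normal _ _
      have h0 : Nat.card ↥(Subgroup.zpowers c ⊔ Z)
          = Nat.card ((Subgroup.zpowers c : Set E) * (Z : Set E) : Set E) := by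
        rw [← hset]; rfl
      rw [h0, auxProdRange]
      have h1 := Nat.card_le_card_of_surjective _
        (Set.rangeFactorization_surjective
          (f := fun x : ↥(Subgroup.zpowers c) × ↥Z => (x.1 : E) * x.2))
      calc Nat.card ↥(Set.range fun x : ↥(Subgroup.zpowers c) × ↥Z => (x.1 : E) * x.2)
          ≤ Nat.card (↥(Subgroup.zpowers c) × ↥Z) := h1
        _ = p * p := by rw [Nat.card_prod, Nat.card_zpowers, hcp, hZ]
    have hCeq : C = Subgroup.zpowers c ⊔ Z := Subgroup.eq_of_le_of_card_ge hCle
      (by rw [hC, pow_two]; exact hcard2)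
    exact hz2C (by rw [hCeq]; exact Subgroup.mem_sup_right hz2Z)
  obtain ⟨d, hdC, hdne⟩ := hex_d
  -- decomposition of E
  have hEdec : ∀ y : E, ∃ a₂ b₂ z : E, a₂ ∈ A ∧ b₂ ∈ B ∧ z ∈ Z ∧ y = a₂ * b₂ * z := by
    let f : ↥A × ↥B × ↥Z → E := fun u => (u.1 : E) * ((u.2.1 : E) * (u.2.2 : E))
    have hinj : Function.Injective f := by
      rintro ⟨u1, v1, w1⟩ ⟨u2, v2, w2⟩ h0
      simp only [f] at h0
      have hw21 : (w2 : E) * (w1 : E)⁻¹ ∈ Z := Z.mul_mem w2.2 (Z.inv_mem w1.2)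
      have hg : ((u2 : E)⁻¹ * u1) * ((v1 : E) * (v2 : E)⁻¹) ∈ Z := by
        have e1 : ((u2 : E)⁻¹ * u1) * ((v1 : E) * (v2 : E)⁻¹)
            = (w2 : E) * (w1 : E)⁻¹ := by
          calc ((u2 : E)⁻¹ * u1) * ((v1 : E) * (v2 : E)⁻¹)
              = (u2 : E)⁻¹ * ((u1 : E) * ((v1 : E) * (w1 : E))) * (w1 : E)⁻¹ * (v2 : E)⁻¹ := by
                group
            _ = (u2 : E)⁻¹ * ((u2 : E) * ((v2 : E) * (w2 : E))) * (w1 : E)⁻¹ * (v2 : E)⁻¹ := by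
                rw [h0]
            _ = (v2 : E) * ((w2 : E) * (w1 : E)⁻¹) * (v2 : E)⁻¹ := by group
            _ = ((w2 : E) * (w1 : E)⁻¹) * (v2 : E) * (v2 : E)⁻¹ := by
                rw [← hcentral _ hw21 (v2 : E)]
            _ = (w2 : E) * (w1 : E)⁻¹ := by group
        rw [e1]; exact hw21
      obtain ⟨h1, h2⟩ := hV _ _ (A.mul_mem (A.inv_mem u2.2) u1.2)
        (B.mul_mem v1.2 (B.inv_mem v2.2)) hg
      have hu : u1 = u2 := Subtype.ext (inv_mul_eq_one.mp h1).symm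
      have hv : v1 = v2 := Subtype.ext (mul_inv_eq_one.mp h2)
      have hw : w1 = w2 := by
        apply Subtype.ext
        apply mul_left_cancel (a := (v1 : E))
        apply mul_left_cancel (a := (u1 : E))
        rw [h0, hu, hv]
      simp only [Prod.ext_iff]
      exact ⟨hu, hv, hw⟩
    have hsurj := auxSurj f hinj (by
      rw [Nat.card_prod, Nat.card_prod, hA, hB, hZ, hE]; ring)
    intro y
    obtain ⟨⟨u, v, w⟩, h⟩ := hsurj y
    exact ⟨u, v, w, u.2, v.2, w.2, by rw [← h]; simp only [f]; rw [mul_assoc]⟩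
  obtain ⟨ad, bd, zd, hadA, hbdB, hzdZ, hddec⟩ := hEdec d
  -- exponents with respect to the generator z₂ of Z
  have hz2gen : ∀ w ∈ Z, ∃ t : ℤ, z₂ ^ t = w := by
    intro w hw
    rw [← hZgen z₂ hz2Z hz21] at hw
    exact Subgroup.mem_zpowers_iff.mp hw
  obtain ⟨g, hg⟩ := hz2gen _ (hcomm b' ad)
  obtain ⟨μ, hμ⟩ := hz2gen zd hzdZ
  obtain ⟨e, he⟩ := hz2gen _ (hcomm bd ad)
  have horderz₂ : orderOf z₂ = p := horder z₂ hz21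
  -- moving central powers of z₂
  have hcentmul : ∀ (X Y : E) (s t : ℤ), (X * z₂ ^ s) * (Y * z₂ ^ t) = (X * Y) * z₂ ^ (s + t) := by
    intro X Y s t
    rw [zpow_add]
    calc (X * z₂ ^ s) * (Y * z₂ ^ t) = X * (z₂ ^ s * Y) * z₂ ^ t := by group
      _ = X * (Y * z₂ ^ s) * z₂ ^ t := by rw [hcentral _ (Z.zpow_mem hz2Z s) Y]
      _ = (X * Y) * (z₂ ^ s * z₂ ^ t) := by group
  -- the key killing lemma
  have key : ∀ (a₂ b₂ d' : E) (ν g₂ : ℤ), a₂ ∈ A → b₂ ∈ B → d' ∈ C →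
      d' = a₂ * b₂ * z₂ ^ ν → b' * a₂ * b'⁻¹ * a₂⁻¹ = z₂ ^ g₂ →
      (1 + (g₂ : ZMod p)) ≠ 0 → ∃ k : ℕ, c ^ k * d' = 1 := by
    intro a₂ b₂ d' ν g₂ ha₂ hb₂ hd' hdec hγ₂ hco
    refine ⟨((-(ν : ZMod p)) * (1 + (g₂ : ZMod p))⁻¹).val, ?_⟩
    set k : ℕ := ((-(ν : ZMod p)) * (1 + (g₂ : ZMod p))⁻¹).val with hkdef
    have hkcast : ((k : ℕ) : ZMod p) = (-(ν : ZMod p)) * (1 + (g₂ : ZMod p))⁻¹ := by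
      rw [hkdef, ZMod.natCast_val, ZMod.cast_id]
    have hvanish : z₂ ^ ((k : ℤ) * (1 + g₂) + ν) = 1 := by
      rw [← orderOf_dvd_iff_zpow_eq_one, horderz₂, ← ZMod.intCast_zmod_eq_zero_iff_dvd]
      push_cast
      rw [hkcast, mul_assoc, inv_mul_cancel₀ hco, mul_one, neg_add_cancel]
    have hγcent : ∀ t : E, z₂ ^ g₂ * t = t * z₂ ^ g₂ :=
      fun t => hcentral _ (Z.zpow_mem hz2Z g₂) t
    have hsemi0 : b' * a₂ = a₂ * b' * z₂ ^ g₂ := by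
      have h1 : b' * a₂ = z₂ ^ g₂ * (a₂ * b') := by rw [← hγ₂]; group
      rw [h1, hcentral _ (Z.zpow_mem hz2Z g₂) (a₂ * b')]
    have hsemi := auxSemicomm hγcent hsemi0 k
    have hab' : Commute a' b' := hHcomm a' b' ha'H hb'H
    have habz : Commute (a' * b') z₂ := (hcentral z₂ hz2Z (a' * b')).symm
    have hck : c ^ k = a' ^ k * b' ^ k * z₂ ^ (k : ℤ) := by
      rw [hcdec, habz.mul_pow, hab'.mul_pow, zpow_natCast]
    have hgk : (z₂ ^ g₂) ^ k = z₂ ^ (g₂ * (k : ℤ)) := by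
      rw [← zpow_natCast (z₂ ^ g₂) k, ← zpow_mul]
    have hXY : a' ^ k * b' ^ k * (a₂ * b₂)
        = (a' ^ k * a₂) * (b' ^ k * b₂) * z₂ ^ (g₂ * (k : ℤ)) := by
      calc a' ^ k * b' ^ k * (a₂ * b₂) = a' ^ k * (b' ^ k * a₂) * b₂ := by group
        _ = a' ^ k * (a₂ * b' ^ k * (z₂ ^ g₂) ^ k) * b₂ := by rw [hsemi]
        _ = (a' ^ k * a₂) * b' ^ k * ((z₂ ^ g₂) ^ k * b₂) := by group
        _ = (a' ^ k * a₂) * b' ^ k * (b₂ * (z₂ ^ g₂) ^ k) := by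
            rw [hcentral _ (Z.pow_mem (Z.zpow_mem hz2Z g₂) k) b₂]
        _ = (a' ^ k * a₂) * (b' ^ k * b₂) * z₂ ^ (g₂ * (k : ℤ)) := by rw [← hgk]; group
    have main : c ^ k * d' = (a' ^ k * a₂) * (b' ^ k * b₂) * z₂ ^ ((k : ℤ) * (1 + g₂) + ν) := by
      calc c ^ k * d' = (a' ^ k * b' ^ k * z₂ ^ (k : ℤ)) * (a₂ * b₂ * z₂ ^ ν) := by
            rw [hck, hdec]
        _ = (a' ^ k * b' ^ k * (a₂ * b₂)) * z₂ ^ ((k : ℤ) + ν) := hcentmul _ _ _ _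
        _ = ((a' ^ k * a₂) * (b' ^ k * b₂) * z₂ ^ (g₂ * (k : ℤ))) * z₂ ^ ((k : ℤ) + ν) := by
            rw [hXY]
        _ = (a' ^ k * a₂) * (b' ^ k * b₂) * z₂ ^ ((k : ℤ) * (1 + g₂) + ν) := by
            rw [mul_assoc, ← zpow_add]
            congr 2
            ring
    have hfin1 : c ^ k * d' = (a' ^ k * a₂) * (b' ^ k * b₂) := by
      rw [main, hvanish, mul_one]
    refine htriple _ ?_ ?_
    · rw [hfin1]
      exact Set.mul_mem_mul (A.mul_mem (A.pow_mem ha'A k) ha₂)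
        (B.mul_mem (B.pow_mem hb'B k) hb₂)
    · exact C.mul_mem (C.pow_mem hcC k) hd'
  -- apply the key lemma
  by_cases hgco : (1 + (g : ZMod p)) ≠ 0
  · obtain ⟨k, hk⟩ := key ad bd d μ g hadA hbdB hdC (by rw [hμ]; exact hddec) hg.symm hgco
    refine hdne (-(k : ℤ)) 1 Z.one_mem ?_
    rw [mul_one, zpow_neg, zpow_natCast]
    exact eq_inv_of_mul_eq_one_right hk
  · push_neg at hgco
    have hsemi0d : bd * ad = ad * bd * z₂ ^ e := by
      have h1 : bd * ad = z₂ ^ e * (ad * bd) := by rw [he]; group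
      rw [h1, hcentral _ (Z.zpow_mem hz2Z e) (ad * bd)]
    have hγ2 : b' * (ad * ad) * b'⁻¹ * (ad * ad)⁻¹ = z₂ ^ (g + g) := by
      have hstep : b' * (ad * ad) * b'⁻¹ * (ad * ad)⁻¹
          = (b' * ad * b'⁻¹ * ad⁻¹) * (ad * (b' * ad * b'⁻¹ * ad⁻¹) * ad⁻¹) := by group
      rw [hstep, ← hg, ← hcentral _ (Z.zpow_mem hz2Z g) ad, zpow_add]
      group
    have hdd : d * d = (ad * ad) * (bd * bd) * z₂ ^ (e + (μ + μ)) := by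
      calc d * d = ((ad * bd) * z₂ ^ μ) * ((ad * bd) * z₂ ^ μ) := by
            rw [hddec, ← hμ]
        _ = ((ad * bd) * (ad * bd)) * z₂ ^ (μ + μ) := hcentmul _ _ _ _
        _ = (ad * (bd * ad) * bd) * z₂ ^ (μ + μ) := by group
        _ = (ad * (ad * bd * z₂ ^ e) * bd) * z₂ ^ (μ + μ) := by rw [hsemi0d]
        _ = ((ad * ad) * (bd * bd) * z₂ ^ e) * z₂ ^ (μ + μ) := by
            rw [show ad * (ad * bd * z₂ ^ e) * bd = (ad * ad) * bd * (z₂ ^ e * bd) from by group,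
              hcentral _ (Z.zpow_mem hz2Z e) bd]
            group
        _ = (ad * ad) * (bd * bd) * z₂ ^ (e + (μ + μ)) := by
            rw [mul_assoc, ← zpow_add]
    have hco2 : (1 + ((g + g : ℤ) : ZMod p)) ≠ 0 := by
      push_cast
      intro hq
      have h10 : (1 : ZMod p) = 0 := by linear_combination hgco + hgco - hq
      exact one_ne_zero h10
    obtain ⟨k, hk⟩ := key (ad * ad) (bd * bd) (d * d) (e + (μ + μ)) (g + g)
      (A.mul_mem hadA hadA) (B.mul_mem hbdB hbdB) (C.mul_mem hdC hdC) hdd hγ2 hco2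
    obtain ⟨t, hpt⟩ := hodd
    have hdd' : d * d = c ^ (-(k : ℤ)) := by
      rw [zpow_neg, zpow_natCast]
      exact eq_inv_of_mul_eq_one_right hk
    refine hdne (-(k : ℤ) * ((t : ℤ) + 1)) 1 Z.one_mem ?_
    rw [mul_one, zpow_mul, ← hdd']
    have h2t : d ^ (p + 1) = d := by rw [pow_succ, hexpE d, one_mul]
    have hddsq : d * d = d ^ 2 := by rw [pow_two]
    rw [show ((t : ℤ) + 1) = ((t + 1 : ℕ) : ℤ) from by push_cast; ring, zpow_natCast,
      hddsq, ← pow_mul, show 2 * (t + 1) = p + 1 from by omega, h2t]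
end

section
/- Let G be a group of order p⁵ (p an odd prime) of nilpotency class 3 that cannot be generated by 2 elements, with |G' : γ₃(G)| = |γ₃(G)| = p. Then there exist generators a, b, c of G such that [a,c] ∈ γ₃(G), [b,c] ∈ γ₃(G), and the subgroup ⟨a,b⟩ has nilpotency class 3 and order p⁴. -/
open Subgroup

open scoped commutatorElement



lemma aux_frattini {G : Type*} [Group G] [Finite G] [Group.IsNilpotent G]
    {K : Subgroup G} (h : K ⊔ (⊤ : Subgroup G).lowerCentralSeries 1 = ⊤) : K = ⊤ := by
  rcases eq_top_or_exists_le_coatom K with h' | ⟨M, hM, hKM⟩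
  · exact h'
  exfalso
  have hcomm : (⊤ : Subgroup G).lowerCentralSeries 1 ≤ M := by
    obtain ⟨g, hg⟩ : ∃ g : G, g ∉ M := by
      by_contra hc
      push_neg at hc
      exact hM.1 (eq_top_iff.mpr fun x _ => hc x)
    have hMg : M ⊔ Subgroup.zpowers g = ⊤ := by
      apply hM.2
      exact lt_of_le_of_ne le_sup_left (fun he => hg (he ▸ mem_sup_right (mem_zpowers g)))
    have hMnormal : M.Normal :=
      Subgroup.NormalizerCondition.normal_of_coatom M (normalizerCondition_of_isNilpotent (G := G)) hM
    let π := QuotientGroup.mk' M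
    have hsurj : Function.Surjective π := QuotientGroup.mk'_surjective M
    have htop : (⊤ : Subgroup (G ⧸ M)) = Subgroup.zpowers (π g) := by
      have : Subgroup.map π ⊤ = ⊤ := Subgroup.map_top_of_surjective π hsurj
      rw [← this, ← hMg, Subgroup.map_sup]
      have h1 : Subgroup.map π M = ⊥ := by
        rw [Subgroup.map_eq_bot_iff, QuotientGroup.ker_mk']
      rw [h1, MonoidHom.map_zpowers, bot_sup_eq]
    rw [Subgroup.top_lowerCentralSeries_one, _root_.commutator_def, Subgroup.commutator_le]
    intro x _ y _
    have hx : π x ∈ Subgroup.zpowers (π g) := htop ▸ Subgroup.mem_top _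
    have hy : π y ∈ Subgroup.zpowers (π g) := htop ▸ Subgroup.mem_top _
    obtain ⟨m, hm⟩ := hx
    obtain ⟨n, hn⟩ := hy
    have : π ⁅x, y⁆ = 1 := by
      rw [map_commutatorElement, commutatorElement_eq_one_iff_commute, ← hm, ← hn]
      exact Commute.zpow_zpow (Commute.refl _) m n
    exact (QuotientGroup.eq_one_iff _).mp this
  exact hM.1 (top_le_iff.mp (h ▸ sup_le hKM hcomm))

lemma aux_eq_of_le_of_card_le {G : Type*} [Group G] [Finite G] {S T : Subgroup G}
    (h : S ≤ T) (hc : Nat.card T ≤ Nat.card S) : S = T := by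
  apply SetLike.coe_injective
  apply Set.eq_of_subset_of_ncard_le h ?_ (Set.toFinite _)
  rwa [← Nat.card_coe_set_eq, ← Nat.card_coe_set_eq]

lemma aux_card_lt {G : Type*} [Group G] [Finite G] {p : ℕ} (hp : p.Prime)
    (hG : Nat.card G = p ^ 5) {S T : Subgroup G} (h : S < T) :
    Nat.card S * p ∣ Nat.card T := by
  obtain ⟨i, hi, hSi⟩ := (Nat.dvd_prime_pow hp).mp (hG ▸ Subgroup.card_subgroup_dvd_card S)
  obtain ⟨j, hj, hTj⟩ := (Nat.dvd_prime_pow hp).mp (hG ▸ Subgroup.card_subgroup_dvd_card T)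
  have hdvd : Nat.card S ∣ Nat.card T := Subgroup.card_dvd_of_le h.le
  have hne : Nat.card S ≠ Nat.card T := fun he =>
    h.ne (aux_eq_of_le_of_card_le h.le he.ge)
  rw [hSi, hTj] at hdvd hne ⊢
  have hij : i < j := by
    rcases Nat.lt_or_ge i j with h' | h'
    · exact h'
    · exact absurd (Nat.dvd_antisymm hdvd (pow_dvd_pow p h')) hne
  rw [← pow_succ]
  exact pow_dvd_pow p hij

/-- A subgroup strictly between ⊥ (with 4-step chain) forced to have card p^4. -/
lemma aux_chain_card {G : Type*} [Group G] [Finite G] {p : ℕ} (hp : p.Prime)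
    (hG : Nat.card G = p ^ 5) {X1 X2 X3 X4 : Subgroup G}
    (h1 : ⊥ < X1) (h2 : X1 < X2) (h3 : X2 < X3) (h4 : X3 < X4) (htop : X4 ≠ ⊤) :
    Nat.card X4 = p ^ 4 := by
  have c1 : Nat.card (⊥ : Subgroup G) = 1 := by simp
  have d1 := aux_card_lt hp hG h1
  have d2 := aux_card_lt hp hG h2
  have d3 := aux_card_lt hp hG h3
  have d4 := aux_card_lt hp hG h4
  rw [c1, one_mul] at d1
  have hp4 : p ^ 4 ∣ Nat.card X4 := by
    have t2 : p * p ∣ Nat.card X2 := dvd_trans (mul_dvd_mul_right d1 p) d2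
    have t3 : p * p * p ∣ Nat.card X3 := dvd_trans (mul_dvd_mul_right t2 p) d3
    have t4 : p * p * p * p ∣ Nat.card X4 := dvd_trans (mul_dvd_mul_right t3 p) d4
    calc p ^ 4 = p * p * p * p := by ring
    _ ∣ Nat.card X4 := t4
  obtain ⟨j, hj, hTj⟩ := (Nat.dvd_prime_pow hp).mp (hG ▸ Subgroup.card_subgroup_dvd_card X4)
  rw [hTj] at hp4 ⊢
  have h4j : 4 ≤ j := (Nat.pow_dvd_pow_iff_le_right hp.one_lt).mp hp4
  interval_cases j
  · rfl
  · exfalso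
    apply htop
    apply aux_eq_of_le_of_card_le le_top
    rw [Subgroup.card_top, hG, hTj]


lemma aux_central_commutator {G : Type*} [Group G] {a b c : G}
    (h1 : ⁅a, c⁆ ∈ Subgroup.center G) (h2 : ⁅b, c⁆ ∈ Subgroup.center G) :
    ⁅⁅a, b⁆, c⁆ = 1 := by
  rw [commutatorElement_eq_one_iff_commute]
  have hc1 : ⁅c, a⁆ ∈ Subgroup.center G := by
    rw [← commutatorElement_inv]; exact inv_mem h1
  have hc2 : ⁅c, b⁆ ∈ Subgroup.center G := by
    rw [← commutatorElement_inv]; exact inv_mem h2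
  have sw : ∀ z ∈ Subgroup.center G, ∀ g t : G, g * (z * t) = z * (g * t) := by
    intro z hz g t
    rw [← mul_assoc, Subgroup.mem_center_iff.mp hz g, mul_assoc]
  have conjfix : ∀ z ∈ Subgroup.center G, ∀ g : G, g⁻¹ * z * g = z := by
    intro z hz g
    rw [mul_assoc, ← Subgroup.mem_center_iff.mp hz g, inv_mul_cancel_left]
  have hw1' : ⁅c, a⁻¹⁆ = ⁅c, a⁆⁻¹ := by
    have e : ⁅c, a⁻¹⁆ = a⁻¹ * ⁅a, c⁆ * a := by group
    rw [e, conjfix _ h1 a, ← commutatorElement_inv]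
  have hw2' : ⁅c, b⁻¹⁆ = ⁅c, b⁆⁻¹ := by
    have e : ⁅c, b⁻¹⁆ = b⁻¹ * ⁅b, c⁆ * b := by group
    rw [e, conjfix _ h2 b, ← commutatorElement_inv]
  have keyid : c * ⁅a, b⁆ =
      ⁅c, a⁆ * (a * (⁅c, b⁆ * (b * (⁅c, a⁻¹⁆ * (a⁻¹ * (⁅c, b⁻¹⁆ * (b⁻¹ * c))))))) := by
    group
  show ⁅a, b⁆ * c = c * ⁅a, b⁆
  symm
  rw [keyid, hw1', hw2']
  rw [sw _ (inv_mem hc1) b, sw _ (inv_mem hc1) ⁅c, b⁆, sw _ (inv_mem hc1) a,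
    mul_inv_cancel_left, sw _ (inv_mem hc2) a⁻¹, sw _ (inv_mem hc2) b, mul_inv_cancel_left]
  group

section Aux
variable {G : Type*} [Group G]

lemma aux_main [Finite G] [Group.IsNilpotent G] (p : ℕ) (hp : p.Prime)
    (hG : Nat.card G = p ^ 5)
    (hL3 : (⊤ : Subgroup G).lowerCentralSeries 3 = ⊥)
    (hgen : ∀ a b : G, Subgroup.closure {a, b} ≠ ⊤)
    (hrel : ((⊤ : Subgroup G).lowerCentralSeries 2).relIndex ((⊤ : Subgroup G).lowerCentralSeries 1) = p)
    (hg3 : Nat.card ((⊤ : Subgroup G).lowerCentralSeries 2) = p) :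
    ∃ a b c : G, Subgroup.closure {a, b, c} = ⊤ ∧
      ⁅a, c⁆ ∈ (⊤ : Subgroup G).lowerCentralSeries 2 ∧ ⁅b, c⁆ ∈ (⊤ : Subgroup G).lowerCentralSeries 2 ∧
      Nat.card ↥(Subgroup.closure {a, b}) = p ^ 4 ∧
      Group.nilpotencyClass ↥(Subgroup.closure {a, b}) = 3 := by
  classical
  set L1 := (⊤ : Subgroup G).lowerCentralSeries 1 with hL1
  set L2 := (⊤ : Subgroup G).lowerCentralSeries 2 with hL2
  -- basic membership facts
  have hcomm2 : ∀ x y : G, ⁅x, y⁆ ∈ L1 := fun x y =>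
    Subgroup.commutator_mem_commutator (Subgroup.mem_top x) (Subgroup.mem_top y)
  have hcomm3 : ∀ x ∈ L1, ∀ y : G, ⁅x, y⁆ ∈ L2 := fun x hx y =>
    Subgroup.commutator_mem_commutator hx (Subgroup.mem_top y)
  have hcomm3' : ∀ (y : G), ∀ x ∈ L1, ⁅y, x⁆ ∈ L2 := by
    intro y x hx
    rw [← commutatorElement_inv]
    exact inv_mem (hcomm3 x hx y)
  have hcent : ∀ z ∈ L2, ∀ g : G, Commute z g := by
    intro z hz g
    rw [← commutatorElement_eq_one_iff_commute]
    have : ⁅z, g⁆ ∈ (⊤ : Subgroup G).lowerCentralSeries 3 :=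
      Subgroup.commutator_mem_commutator hz (Subgroup.mem_top g)
    rw [hL3] at this
    exact this
  -- choice of a b
  obtain ⟨a, b, hab⟩ : ∃ a b : G, ⁅a, b⁆ ∉ L2 := by
    by_contra hc
    push_neg at hc
    have hle : L1 ≤ L2 := by
      rw [hL1, Subgroup.top_lowerCentralSeries_one, _root_.commutator_def, Subgroup.commutator_le]
      exact fun x _ y _ => hc x y
    have h1 := Subgroup.relIndex_eq_one.mpr hle
    rw [hrel] at h1
    exact hp.one_lt.ne' h1
  set u := ⁅a, b⁆ with hu
  have hu1 : u ∈ L1 := hcomm2 a b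
  -- G' = <u> ⊔ L2
  have hG' : Subgroup.zpowers u ⊔ L2 = L1 := by
    set K := Subgroup.zpowers u ⊔ L2 with hK
    have hKle : K ≤ L1 := sup_le (Subgroup.zpowers_le.mpr hu1)
      ((Subgroup.lowerCentralSeries_antitone ⊤) (by norm_num))
    have hmul := Subgroup.relIndex_mul_relIndex L2 K L1 le_sup_right hKle
    rw [hrel] at hmul
    have h1 : L2.relIndex K ≠ 1 := by
      intro h1
      have hle := Subgroup.relIndex_eq_one.mp h1
      exact hab (hle (Subgroup.mem_sup_left (Subgroup.mem_zpowers u)))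
    rcases hp.eq_one_or_self_of_dvd (K.relIndex L1) (Dvd.intro_left _ hmul) with h | h
    · exact le_antisymm hKle (Subgroup.relIndex_eq_one.mp h)
    · exfalso
      rw [h] at hmul
      have : L2.relIndex K = 1 := by
        have hp0 : 0 < p := hp.pos
        nlinarith [hmul]
      exact h1 this
  -- quotient by L2
  let pi := QuotientGroup.mk' L2
  have hpi1 : ∀ x : G, pi x = 1 ↔ x ∈ L2 := fun x => QuotientGroup.eq_one_iff x
  have key : ∀ g x y : G, ⁅g, x * y⁆ = ⁅g, x⁆ * (x * ⁅g, y⁆ * x⁻¹) := by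
    intro g x y
    simp only [commutatorElement_def]
    group
  have keyconj : ∀ v x : G, v ∈ L1 → pi (x * v * x⁻¹) = pi v := by
    intro v x hv
    have h1 : x * v * x⁻¹ = ⁅x, v⁆ * v := by group
    rw [h1, map_mul, (hpi1 _).mpr (hcomm3' x v hv), one_mul]
  let f : G → G →* G ⧸ L2 := fun g => MonoidHom.mk' (fun x => pi ⁅g, x⁆) (by
    intro x y
    show pi ⁅g, x * y⁆ = pi ⁅g, x⁆ * pi ⁅g, y⁆
    rw [key g x y, map_mul, keyconj _ x (hcomm2 g y)])
  have hf : ∀ g x : G, f g x = pi ⁅g, x⁆ := fun g x => rfl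
  -- a ∉ L1
  have haL1 : a ∉ L1 := fun ha => hab (hcomm3 a ha b)
  -- b ∉ zpowers a ⊔ L1
  have hbA : b ∉ Subgroup.zpowers a ⊔ L1 := by
    intro hb
    have hle : Subgroup.zpowers a ⊔ L1 ≤ (f a).ker := by
      apply sup_le
      · rw [Subgroup.zpowers_le, MonoidHom.mem_ker, hf, commutatorElement_self, map_one]
      · intro x hx
        rw [MonoidHom.mem_ker, hf, hpi1]
        exact hcomm3' a x hx
    have h1 : pi ⁅a, b⁆ = 1 := hle hb
    exact hab ((hpi1 _).mp h1)
  -- the subgroup M = <a,b> ⊔ G'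
  set A := Subgroup.zpowers a ⊔ L1 with hA
  set M := Subgroup.closure {a, b} ⊔ L1 with hM
  have hMne : M ≠ ⊤ := fun hMt => hgen a b (aux_frattini hMt)
  have hchain1 : (⊥ : Subgroup G) < L2 := by
    rw [bot_lt_iff_ne_bot]
    intro hb
    apply hp.one_lt.ne'
    rw [← hg3, hb]
    simp
  have hchain2 : L2 < L1 :=
    lt_of_le_of_ne ((Subgroup.lowerCentralSeries_antitone ⊤) (by norm_num))
      (fun he => hab (by rw [he]; exact hu1))
  have hchain3 : L1 < A :=
    lt_of_le_of_ne le_sup_right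
      (fun he => haL1 (by rw [he]; exact Subgroup.mem_sup_left (Subgroup.mem_zpowers a)))
  have hchain4 : A < M := by
    refine lt_of_le_of_ne (sup_le_sup_right (Subgroup.zpowers_le.mpr
      (Subgroup.subset_closure (by simp))) L1) (fun he => hbA ?_)
    rw [he]
    exact Subgroup.mem_sup_left (Subgroup.subset_closure (by simp))
  have cardM : Nat.card M = p ^ 4 :=
    aux_chain_card hp hG hchain1 hchain2 hchain3 hchain4 hMne
  obtain ⟨c, hc⟩ : ∃ c : G, c ∉ M := by
    by_contra hcc
    push_neg at hcc
    exact hMne (eq_top_iff.mpr fun x _ => hcc x)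
  have habc : Subgroup.closure {a, b, c} = ⊤ := by
    apply aux_frattini
    set K := Subgroup.closure {a, b, c} ⊔ L1 with hK
    have hMK : M < K := by
      refine lt_of_le_of_ne (sup_le_sup_right (Subgroup.closure_mono (by
        intro x hx; simp at hx; rcases hx with rfl | rfl <;> simp)) L1) (fun he => hc ?_)
      rw [he]
      exact Subgroup.mem_sup_left (Subgroup.subset_closure (by simp))
    have hdvd := aux_card_lt hp hG hMK
    rw [cardM, ← pow_succ] at hdvd
    have hcard : Nat.card K = p ^ 5 :=
      Nat.dvd_antisymm (hG ▸ Subgroup.card_subgroup_dvd_card K) hdvd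
    apply aux_eq_of_le_of_card_le le_top
    rw [Subgroup.card_top, hG, hcard]
  -- adjustment of c
  have hpiL1 : ∀ w ∈ L1, ∃ n : ℤ, pi w = (pi u) ^ n := by
    intro w hw
    rw [← hG'] at hw
    have hmem : pi w ∈ Subgroup.map pi (Subgroup.zpowers u ⊔ L2) :=
      Subgroup.mem_map_of_mem pi hw
    rw [Subgroup.map_sup, MonoidHom.map_zpowers] at hmem
    have h2 : Subgroup.map pi L2 = ⊥ := by
      rw [Subgroup.map_eq_bot_iff, QuotientGroup.ker_mk']
    rw [h2, sup_bot_eq] at hmem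
    obtain ⟨n, hn⟩ := Subgroup.mem_zpowers_iff.mp hmem
    exact ⟨n, hn.symm⟩
  obtain ⟨al, hal⟩ := hpiL1 ⁅a, c⁆ (hcomm2 a c)
  set c2 := c * b ^ (-al) with hc2
  have hfa_c2 : pi ⁅a, c2⁆ = 1 := by
    have h1 : f a c2 = f a c * (f a b) ^ (-al) := by rw [hc2, map_mul, map_zpow]
    rw [hf, hf, hf] at h1
    rw [h1, hal]
    have : pi ⁅a, b⁆ = pi u := rfl
    rw [this, ← zpow_add, add_neg_cancel, zpow_zero]
  obtain ⟨be, hbe⟩ := hpiL1 ⁅b, c2⁆ (hcomm2 b c2)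
  set c3 := c2 * a ^ be with hc3
  have hfb_c3 : pi ⁅b, c3⁆ = 1 := by
    have h1 : f b c3 = f b c2 * (f b a) ^ be := by rw [hc3, map_mul, map_zpow]
    rw [hf, hf, hf] at h1
    rw [h1, hbe]
    have hba : pi ⁅b, a⁆ = (pi u)⁻¹ := by
      rw [show ⁅b, a⁆ = ⁅a, b⁆⁻¹ from (commutatorElement_inv a b).symm, map_inv]
    rw [hba, inv_zpow, ← zpow_neg, ← zpow_add, add_neg_cancel, zpow_zero]
  have hfa_c3 : pi ⁅a, c3⁆ = 1 := by
    have h1 : f a c3 = f a c2 * (f a a) ^ be := by rw [hc3, map_mul, map_zpow]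
    rw [hf, hf, hf] at h1
    rw [h1, hfa_c2, commutatorElement_self, map_one, one_zpow, one_mul]
  have hac3 : ⁅a, c3⁆ ∈ L2 := (hpi1 _).mp hfa_c3
  have hbc3 : ⁅b, c3⁆ ∈ L2 := (hpi1 _).mp hfb_c3
  have hcl3 : Subgroup.closure {a, b, c3} = ⊤ := by
    rw [eq_top_iff, ← habc, Subgroup.closure_le]
    intro x hx
    simp only [Set.mem_insert_iff, Set.mem_singleton_iff] at hx
    rcases hx with rfl | rfl | rfl
    · exact Subgroup.subset_closure (by simp)
    · exact Subgroup.subset_closure (by simp)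
    · have he : x = c3 * a ^ (-be) * b ^ al := by rw [hc3, hc2]; group
      rw [he]
      exact mul_mem (mul_mem (Subgroup.subset_closure (by simp))
        (zpow_mem (Subgroup.subset_closure (by simp)) _))
        (zpow_mem (Subgroup.subset_closure (by simp)) _)
  -- the homomorphism x ↦ ⁅u, x⁆
  have hcenter : ∀ z ∈ L2, z ∈ Subgroup.center G :=
    fun z hz => Subgroup.mem_center_iff.mpr (fun g => (hcent z hz g).symm)
  have huc3 : ⁅u, c3⁆ = 1 := aux_central_commutator (hcenter _ hac3) (hcenter _ hbc3)
  let phi : G →* G := MonoidHom.mk' (fun x => ⁅u, x⁆) (by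
    intro x y
    show ⁅u, x * y⁆ = ⁅u, x⁆ * ⁅u, y⁆
    rw [key u x y]
    congr 1
    rw [← hcent _ (hcomm3 u hu1 y) x, mul_inv_cancel_right])
  have hphi : ∀ x : G, phi x = ⁅u, x⁆ := fun _ => rfl
  set C := Subgroup.closure {⁅u, a⁆, ⁅u, b⁆} with hC
  have hCle : ∀ x : G, ⁅u, x⁆ ∈ C := by
    intro x
    have hx : phi x ∈ Subgroup.map phi ⊤ := Subgroup.mem_map_of_mem phi (Subgroup.mem_top x)
    rw [← hcl3, MonoidHom.map_closure] at hx
    have himg : phi '' {a, b, c3} ⊆ ↑C := by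
      rintro y ⟨w, hw, rfl⟩
      simp only [Set.mem_insert_iff, Set.mem_singleton_iff] at hw
      simp only [SetLike.mem_coe, hphi]
      rcases hw with hw | hw | hw <;> rw [hw]
      · exact Subgroup.subset_closure (by simp)
      · exact Subgroup.subset_closure (by simp)
      · rw [huc3]
        exact one_mem C
    exact (Subgroup.closure_le C).mpr himg hx
  -- L2 = C
  have hCL2 : C ≤ L2 := by
    rw [hC, Subgroup.closure_le]
    rintro y hy
    simp only [Set.mem_insert_iff, Set.mem_singleton_iff] at hy
    rcases hy with rfl | rfl
    · exact hcomm3 u hu1 a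
    · exact hcomm3 u hu1 b
  have hL2C : L2 ≤ C := by
    have hstep : (⊤ : Subgroup G).lowerCentralSeries 2 = ⁅L1, ⊤⁆ := rfl
    rw [hL2, hstep, Subgroup.commutator_le]
    intro g hg x _
    -- D : the elements g with ∀ x, ⁅g,x⁆ ∈ C ∧ ⁅g,x⁆ ∈ L2
    let D : Subgroup G :=
      { carrier := {g : G | ∀ x : G, ⁅g, x⁆ ∈ C ∧ ⁅g, x⁆ ∈ L2}
        one_mem' := by
          intro x
          have : ⁅(1 : G), x⁆ = 1 := by group
          rw [this]
          exact ⟨one_mem C, one_mem L2⟩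
        mul_mem' := by
          intro g h hgm hhm x
          have hid : ⁅g * h, x⁆ = g * ⁅h, x⁆ * g⁻¹ * ⁅g, x⁆ := by group
          have hcen : g * ⁅h, x⁆ * g⁻¹ = ⁅h, x⁆ := by
            rw [← hcent _ (hhm x).2 g, mul_inv_cancel_right]
          rw [hid, hcen]
          exact ⟨mul_mem (hhm x).1 (hgm x).1, mul_mem (hhm x).2 (hgm x).2⟩
        inv_mem' := by
          intro g hgm x
          have hid : ⁅g⁻¹, x⁆ = g⁻¹ * ⁅g, x⁆⁻¹ * g := by group
          have hcen : g⁻¹ * ⁅g, x⁆⁻¹ * g = ⁅g, x⁆⁻¹ := by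
            rw [← (hcent _ (hgm x).2 g⁻¹).inv_left.eq, inv_mul_cancel_right]
          rw [hid, hcen]
          exact ⟨inv_mem (hgm x).1, inv_mem (hgm x).2⟩ }
    have hDle : Subgroup.zpowers u ⊔ L2 ≤ D := by
      apply sup_le
      · rw [Subgroup.zpowers_le]
        intro x
        exact ⟨hCle x, hcomm3 u hu1 x⟩
      · intro z hz x
        have h1 : ⁅z, x⁆ = 1 := commutatorElement_eq_one_iff_commute.mpr (hcent z hz x)
        rw [h1]
        exact ⟨one_mem C, one_mem L2⟩
    rw [← hG'] at hg
    exact ((hDle hg) x).1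
  -- one of the two generators of C is nontrivial
  have hne : ⁅u, a⁆ ≠ 1 ∨ ⁅u, b⁆ ≠ 1 := by
    by_contra hcon
    push_neg at hcon
    have hCbot : C = ⊥ := by
      rw [hC, hcon.1, hcon.2]
      simp
    have : L2 = ⊥ := le_bot_iff.mp (hCbot ▸ hL2C)
    apply hp.one_lt.ne'
    rw [← hg3, this]
    simp
  -- the subgroup H
  set H := Subgroup.closure {a, b} with hH
  have haH : a ∈ H := Subgroup.subset_closure (by simp)
  have hbH : b ∈ H := Subgroup.subset_closure (by simp)
  have huH : u ∈ H := by
    rw [hu, commutatorElement_def]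
    exact mul_mem (mul_mem (mul_mem haH hbH) (inv_mem haH)) (inv_mem hbH)
  have hL2H : L2 ≤ H := by
    apply le_trans hL2C
    rw [hC, Subgroup.closure_le]
    rintro y hy
    simp only [Set.mem_insert_iff, Set.mem_singleton_iff] at hy
    have hmem : ∀ w : G, w ∈ H → ⁅u, w⁆ ∈ H := by
      intro w hw
      rw [commutatorElement_def]
      exact mul_mem (mul_mem (mul_mem huH hw) (inv_mem huH)) (inv_mem hw)
    rcases hy with rfl | rfl
    · exact hmem a haH
    · exact hmem b hbH
  have hL1H : L1 ≤ H := by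
    rw [← hG']
    exact sup_le (Subgroup.zpowers_le.mpr huH) hL2H
  have hAH : A < H := by
    refine lt_of_le_of_ne (sup_le (Subgroup.zpowers_le.mpr haH) hL1H) (fun he => hbA ?_)
    rw [he]
    exact hbH
  have hHne : H ≠ ⊤ := hgen a b
  have cardH : Nat.card H = p ^ 4 :=
    aux_chain_card hp hG hchain1 hchain2 hchain3 hAH hHne
  -- nilpotency class of H
  have hHL3 : (⊤ : Subgroup ↥H).lowerCentralSeries 3 = ⊥ := by
    rw [eq_bot_iff]
    intro x hx
    have hmap : (x : G) ∈ (⊤ : Subgroup G).lowerCentralSeries 3 :=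
      Subgroup.lowerCentralSeries_map_subtype_le H 3 ⟨x, hx, rfl⟩
    rw [hL3, Subgroup.mem_bot] at hmap
    rw [Subgroup.mem_bot]
    exact Subtype.ext hmap
  set a' : ↥H := ⟨a, haH⟩ with ha'
  set b' : ↥H := ⟨b, hbH⟩ with hb'
  have hwmem : ∀ x' : ↥H, ⁅⁅a', b'⁆, x'⁆ ∈ (⊤ : Subgroup ↥H).lowerCentralSeries 2 := by
    intro x'
    show ⁅⁅a', b'⁆, x'⁆ ∈ ⁅(⊤ : Subgroup ↥H).lowerCentralSeries 1, ⊤⁆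
    apply Subgroup.commutator_mem_commutator ?_ (Subgroup.mem_top x')
    show ⁅a', b'⁆ ∈ ⁅(⊤ : Subgroup ↥H).lowerCentralSeries 0, ⊤⁆
    exact Subgroup.commutator_mem_commutator (Subgroup.mem_top a') (Subgroup.mem_top b')
  have hHL2 : (⊤ : Subgroup ↥H).lowerCentralSeries 2 ≠ ⊥ := by
    intro hbot
    have coe1 : ((⁅⁅a', b'⁆, a'⁆ : ↥H) : G) = ⁅u, a⁆ := rfl
    have coe2 : ((⁅⁅a', b'⁆, b'⁆ : ↥H) : G) = ⁅u, b⁆ := rfl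
    rcases hne with h | h
    · apply h
      have := hwmem a'
      rw [hbot, Subgroup.mem_bot] at this
      rw [← coe1, this]
      rfl
    · apply h
      have := hwmem b'
      rw [hbot, Subgroup.mem_bot] at this
      rw [← coe2, this]
      rfl
  have classH : Group.nilpotencyClass ↥H = 3 := by
    rw [← Subgroup.lowerCentralSeries_length_eq_nilpotencyClass, Nat.find_eq_iff]
    refine ⟨hHL3, ?_⟩
    intro n hn hbot
    apply hHL2
    rw [eq_bot_iff, ← hbot]
    exact (Subgroup.lowerCentralSeries_antitone ⊤) (by omega)
  exact ⟨a, b, c3, hcl3, hac3, hbc3, cardH, classH⟩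
end Aux


theorem stmt19 {G : Type*} [Group G] (p : ℕ) (hp : p.Prime) (hodd : Odd p)
    (hG : Nat.card G = p ^ 5) [Group.IsNilpotent G]
    (hclass : Group.nilpotencyClass G = 3)
    (hgen : ∀ a b : G, Subgroup.closure {a, b} ≠ ⊤)
    (hrel : ((⊤ : Subgroup G).lowerCentralSeries 2).relIndex ((⊤ : Subgroup G).lowerCentralSeries 1) = p)
    (hg3 : Nat.card ((⊤ : Subgroup G).lowerCentralSeries 2) = p) :
    ∃ a b c : G, Subgroup.closure {a, b, c} = ⊤ ∧
      ⁅a, c⁆ ∈ (⊤ : Subgroup G).lowerCentralSeries 2 ∧ ⁅b, c⁆ ∈ (⊤ : Subgroup G).lowerCentralSeries 2 ∧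
      Nat.card ↥(Subgroup.closure {a, b}) = p ^ 4 ∧
      Group.nilpotencyClass ↥(Subgroup.closure {a, b}) = 3 := by
  haveI : Finite G := Nat.finite_of_card_ne_zero (by rw [hG]; exact (pow_pos hp.pos 5).ne')
  have hL3 : (⊤ : Subgroup G).lowerCentralSeries 3 = ⊥ := by
    rw [← hclass]
    exact Subgroup.lowerCentralSeries_nilpotencyClass
  exact aux_main p hp hG hL3 hgen hrel hg3
end
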